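/- Let V be an (n+1)-dimensional vector space over a field F of characteristic ≠ 2 with a nondegenerate symmetric bilinear form f, n ≥ 1. Then the pregeometry on proper nondegenerate subspaces of V (with symmetrized containment as incidence and vector-space dimension as type) is a geometry: every flag of pairwise-incident nondegenerate proper subspaces extends to a maximal flag containing one nondegenerate subspace of each dimension 1, ..., n. -/

import Mathlib

open Module

/-- Membership version of nondegeneracy of a restricted bilinear form. -/
lemma restrict_nondeg_iff_mem {F V : Type*} [Field F] [AddCommGroup V] [Module F V]
    [FiniteDimensional F V]
    (B : LinearMap.BilinForm F V) (p : Submodule F V) :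
    (B.restrict p).Nondegenerate ↔ ∀ x ∈ p, (∀ y ∈ p, B x y = 0) → x = 0 := by
  constructor
  · intro h x hx hxy
    have := h.1 ⟨x, hx⟩ (fun y => by
      simpa using hxy y y.2)
    simpa using this
  · intro h
    refine LinearMap.BilinForm.Nondegenerate.ofSeparatingLeft ?_
    intro m hm
    exact Subtype.ext (h m m.2 fun y hy => by simpa using hm ⟨y, hy⟩)

/-- Key step: a nondegenerate subspace strictly inside a nondegenerate subspace can be
enlarged by one dimension, staying nondegenerate and inside the bigger one. -/
lemma nondeg_step {F V : Type*} [Field F] [AddCommGroup V] [Module F V]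
    [FiniteDimensional F V] (h2 : (2 : F) ≠ 0)
    {B : LinearMap.BilinForm F V} (hsymm : B.IsSymm) (hB : B.Nondegenerate)
    {U W : Submodule F V} (hUW : U ≤ W) (hU : (B.restrict U).Nondegenerate)
    (hW : (B.restrict W).Nondegenerate) (hlt : finrank F U < finrank F W) :
    ∃ U' : Submodule F V, U ≤ U' ∧ U' ≤ W ∧ (B.restrict U').Nondegenerate ∧
      finrank F U' = finrank F U + 1 := by
  have hrefl : B.IsRefl := hsymm.isRefl
  -- dimension bound on (W ⊓ B.orthogonal U)
  have horth : finrank F (B.orthogonal U) = finrank F V - finrank F U :=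
    LinearMap.BilinForm.finrank_orthogonal hB U
  have hsupinf := Submodule.finrank_sup_add_finrank_inf_eq W (B.orthogonal U)
  have hsuple : finrank F ↥(W ⊔ B.orthogonal U) ≤ finrank F V := Submodule.finrank_le _
  have hUle : finrank F U ≤ finrank F V := Submodule.finrank_le _
  have hWle : finrank F W ≤ finrank F V := Submodule.finrank_le _
  have hOrank : finrank F W ≤ finrank F U + finrank F ↥(W ⊓ B.orthogonal U) := by omega
  -- a vector of (W ⊓ B.orthogonal U) with nonzero self-pairing
  have hex : ∃ v ∈ (W ⊓ B.orthogonal U), B v v ≠ 0 := by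
    by_contra hcon
    push_neg at hcon
    -- all pairings on (W ⊓ B.orthogonal U) vanish
    have hzero : ∀ x ∈ (W ⊓ B.orthogonal U), ∀ y ∈ (W ⊓ B.orthogonal U), B x y = 0 := by
      intro x hx y hy
      have hxy : B (x + y) (x + y) = 0 := hcon _ (add_mem hx hy)
      have hx' : B x x = 0 := hcon _ hx
      have hy' : B y y = 0 := hcon _ hy
      have hsy : B y x = B x y := by
        have := hsymm.eq x y; simpa using this.symm
      have h2' : B x y * 2 = 0 := by
        simp only [map_add, LinearMap.add_apply] at hxy
        rw [hx', hy', hsy] at hxy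
        linear_combination hxy
      rcases mul_eq_zero.mp h2' with h | h
      · exact h
      · exact absurd h h2
    -- U ⊓ (W ⊓ B.orthogonal U) = ⊥
    have hUO : U ⊓ (W ⊓ B.orthogonal U) = ⊥ := by
      rw [eq_bot_iff]
      rintro x ⟨hxU, hxO⟩
      have hxorth : x ∈ B.orthogonal U := hxO.2
      have : x = 0 := (restrict_nondeg_iff_mem B U).mp hU x hxU
        (fun y hy => hrefl _ _ (hxorth y hy))
      simp [this]
    -- U ⊔ (W ⊓ B.orthogonal U) = W
    have hsup : U ⊔ (W ⊓ B.orthogonal U) = W := by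
      have hle : U ⊔ (W ⊓ B.orthogonal U) ≤ W := sup_le hUW inf_le_left
      refine Submodule.eq_of_le_of_finrank_le hle ?_
      have := Submodule.finrank_sup_add_finrank_inf_eq U (W ⊓ B.orthogonal U)
      rw [hUO] at this
      simp only [finrank_bot, add_zero] at this
      omega
    -- (W ⊓ B.orthogonal U) is nontrivial
    have hOne : (W ⊓ B.orthogonal U) ≠ ⊥ := by
      intro hbot
      rw [hbot, finrank_bot] at hOrank
      omega
    obtain ⟨x, hxO, hxne⟩ := Submodule.exists_mem_ne_zero_of_ne_bot hOne
    -- x kills all of W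
    have : x = 0 := by
      refine (restrict_nondeg_iff_mem B W).mp hW x hxO.1 ?_
      intro y hy
      rw [← hsup] at hy
      obtain ⟨u, hu, o, ho, rfl⟩ := Submodule.mem_sup.mp hy
      have h1 : B x u = 0 := hrefl _ _ (hxO.2 u hu)
      have h2 : B x o = 0 := hzero x hxO o ho
      simp [h1, h2]
    exact hxne this
  obtain ⟨v, hvO, hvv⟩ := hex
  have hvW : v ∈ W := hvO.1
  have hvorth : v ∈ B.orthogonal U := hvO.2
  have hvne : v ≠ 0 := by rintro rfl; simp at hvv
  have hvnU : v ∉ U := fun h => hvv (hvorth v h)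
  refine ⟨U ⊔ Submodule.span F {v}, le_sup_left, sup_le hUW ?_, ?_, ?_⟩
  · rwa [Submodule.span_singleton_le_iff_mem]
  · -- nondegeneracy
    rw [restrict_nondeg_iff_mem]
    intro x hx hxy
    obtain ⟨u, hu, z, hz, rfl⟩ := Submodule.mem_sup.mp hx
    obtain ⟨c, rfl⟩ := Submodule.mem_span_singleton.mp hz
    have hc : c = 0 := by
      have hv' : v ∈ U ⊔ Submodule.span F {v} :=
        Submodule.mem_sup_right (Submodule.mem_span_singleton_self v)
      have := hxy v hv'
      have huv : B u v = 0 := hvorth u hu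
      simp only [map_add, LinearMap.add_apply, map_smul, LinearMap.smul_apply,
        smul_eq_mul, huv, zero_add] at this
      exact (mul_eq_zero.mp this).resolve_right hvv
    subst hc
    simp only [zero_smul, add_zero]
    refine (restrict_nondeg_iff_mem B U).mp hU u hu fun y hy => ?_
    have := hxy y (Submodule.mem_sup_left hy)
    simpa using this
  · -- finrank
    have hinf : U ⊓ Submodule.span F {v} = ⊥ := by
      rw [eq_bot_iff]
      rintro x ⟨hxU, hxs⟩
      obtain ⟨c, rfl⟩ := Submodule.mem_span_singleton.mp hxs
      rcases eq_or_ne c 0 with rfl | hc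
      · simp
      · have hvU : v ∈ U := by
          have h := U.smul_mem c⁻¹ hxU
          rwa [smul_smul, inv_mul_cancel₀ hc, one_smul] at h
        exact absurd hvU hvnU
    have := Submodule.finrank_sup_add_finrank_inf_eq U (Submodule.span F {v})
    rw [hinf, finrank_span_singleton hvne] at this
    simpa using this

/-- The pregeometry of proper nondegenerate subspaces of an `(n+1)`-dimensional
space with a nondegenerate symmetric bilinear form (char ≠ 2) is a geometry:
every flag (chain of proper nonzero nondegenerate subspaces) extends to a chamber,
i.e. to a chain containing one nondegenerate subspace of each dimension `1, ..., n`. -/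
theorem orthogonal_pregeometry_isGeometry
    {F V : Type*} [Field F] [AddCommGroup V] [Module F V]
    (h2 : (2 : F) ≠ 0) (n : ℕ) (hn : 1 ≤ n) (hdim : finrank F V = n + 1)
    (B : LinearMap.BilinForm F V) (hsymm : B.IsSymm) (hB : B.Nondegenerate)
    (S : Set (Submodule F V)) (hchain : IsChain (· ≤ ·) S)
    (hS : ∀ U ∈ S, (B.restrict U).Nondegenerate ∧ U ≠ ⊥ ∧ U ≠ ⊤) :
    ∃ C : Fin n → Submodule F V, Monotone C ∧
      (∀ k : Fin n, (B.restrict (C k)).Nondegenerate ∧ finrank F (C k) = (k : ℕ) + 1) ∧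
      S ⊆ Set.range C := by
  have hfin : FiniteDimensional F V := FiniteDimensional.of_finrank_pos (by omega)
  have hcomp : ∀ U ∈ S, ∀ W ∈ S, finrank F U ≤ finrank F W → U ≤ W := by
    intro U hU W hW h
    rcases hchain.total hU hW with h' | h'
    · exact h'
    · exact (Submodule.eq_of_le_of_finrank_le h' h).ge
  have hSfin : S.Finite := by
    have hinj : Set.InjOn (fun U : Submodule F V => finrank F ↥U) S := by
      intro U hU W hW h
      exact le_antisymm (hcomp U hU W hW h.le) (hcomp W hW U hU h.ge)
    apply Set.Finite.of_finite_image ?_ hinj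
    apply Set.Finite.subset (Set.finite_Iio (n + 2))
    rintro _ ⟨U, hU, rfl⟩
    have := Submodule.finrank_le U
    simp only [Set.mem_Iio]
    omega
  have hTop : (B.restrict (⊤ : Submodule F V)).Nondegenerate := by
    rw [restrict_nondeg_iff_mem]
    intro x _ h
    exact hB.1 x fun y => h y trivial
  have hBot : (B.restrict (⊥ : Submodule F V)).Nondegenerate := by
    rw [restrict_nondeg_iff_mem]
    intro x hx _
    simpa using hx
  have hfr1 : ∀ U ∈ S, 1 ≤ finrank F U ∧ finrank F U ≤ n := by
    intro U hU
    obtain ⟨-, hnb, hnt⟩ := hS U hU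
    have hle : finrank F U ≤ n + 1 := hdim ▸ Submodule.finrank_le U
    constructor
    · by_contra h
      push_neg at h
      exact hnb (Submodule.finrank_eq_zero.mp (by omega))
    · by_contra h
      push_neg at h
      exact hnt (Submodule.eq_top_of_finrank_eq (by omega))
  have key : ∀ k, k ≤ n → ∃ D : ℕ → Submodule F V,
      (∀ i j, i ≤ j → j ≤ k → D i ≤ D j) ∧
      (∀ i ≤ k, (B.restrict (D i)).Nondegenerate ∧ finrank F (D i) = i) ∧
      (∀ U ∈ S, ∀ i ≤ k, (finrank F U ≤ i → U ≤ D i) ∧ (i ≤ finrank F U → D i ≤ U)) := by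
    intro k
    induction k with
    | zero =>
      intro _
      refine ⟨fun _ => ⊥, fun _ _ _ _ => le_rfl, ?_, ?_⟩
      · intro i hi
        obtain rfl : i = 0 := Nat.le_zero.mp hi
        exact ⟨hBot, finrank_bot F V⟩
      · intro U hU i hi
        obtain rfl : i = 0 := Nat.le_zero.mp hi
        refine ⟨fun h => absurd ?_ (hS U hU).2.1, fun _ => bot_le⟩
        exact Submodule.finrank_eq_zero.mp (Nat.le_zero.mp h)
    | succ k ih =>
      intro hk1
      obtain ⟨D, hmono, hprop, hinv⟩ := ih (by omega)
      obtain ⟨hDnd, hDfr⟩ := hprop k le_rfl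
      have hstep : ∃ E', D k ≤ E' ∧ (B.restrict E').Nondegenerate ∧
          finrank F E' = k + 1 ∧
          (∀ U ∈ S, (finrank F U ≤ k + 1 → U ≤ E') ∧ (k + 1 ≤ finrank F U → E' ≤ U)) := by
        by_cases hA : ∃ U₀ ∈ S, finrank F ↥U₀ = k + 1
        · obtain ⟨U₀, hU₀S, hU₀⟩ := hA
          refine ⟨U₀, (hinv U₀ hU₀S k le_rfl).2 (by omega), (hS U₀ hU₀S).1, hU₀, ?_⟩
          intro U hU
          exact ⟨fun h => hcomp U hU U₀ hU₀S (by omega),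
            fun h => hcomp U₀ hU₀S U hU (by omega)⟩
        · push_neg at hA
          by_cases hT : ∃ U ∈ S, k + 1 ≤ finrank F ↥U
          · obtain ⟨W₀, hW₀, hWmin⟩ :=
              Set.exists_min_image {U ∈ S | k + 1 ≤ finrank F ↥U}
                (fun U => finrank F ↥U) (hSfin.subset fun x hx => hx.1)
                (let ⟨U, hU, h⟩ := hT; ⟨U, hU, h⟩)
            have hW₀S : W₀ ∈ S := hW₀.1
            have hW₀fr : k + 2 ≤ finrank F W₀ := by
              have := hA W₀ hW₀S
              have := hW₀.2
              omega
            obtain ⟨E', h1, h1', hnd', hfr'⟩ :=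
              nondeg_step h2 hsymm hB ((hinv W₀ hW₀S k le_rfl).2 (by omega))
                hDnd (hS W₀ hW₀S).1 (by omega)
            refine ⟨E', h1, hnd', by omega, ?_⟩
            intro U hU
            constructor
            · intro h
              have hUk : finrank F U ≤ k := by have := hA U hU; omega
              exact le_trans ((hinv U hU k le_rfl).1 hUk) h1
            · intro h
              exact le_trans h1' (hcomp W₀ hW₀S U hU (hWmin U ⟨hU, h⟩))
          · push_neg at hT
            obtain ⟨E', h1, h1', hnd', hfr'⟩ :=
              nondeg_step h2 hsymm hB (le_top : D k ≤ ⊤) hDnd hTop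
                (by rw [hDfr, finrank_top, hdim]; omega)
            refine ⟨E', h1, hnd', by omega, ?_⟩
            intro U hU
            constructor
            · intro h
              have hUk : finrank F U ≤ k := by have := hT U hU; omega
              exact le_trans ((hinv U hU k le_rfl).1 hUk) h1
            · intro h
              exact absurd (hT U hU) (by omega)
      obtain ⟨E', hE1, hE2, hE3, hE4⟩ := hstep
      refine ⟨fun i => if i ≤ k then D i else E', ?_, ?_, ?_⟩
      · intro i j hij hjk
        by_cases hik : i ≤ k <;> by_cases hjk' : j ≤ k <;>
          simp only [hik, hjk', if_true, if_false, if_pos, if_neg, not_true, not_false_iff]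
        · exact hmono i j hij hjk'
        · exact le_trans (hmono i k hik le_rfl) hE1
        · omega
        · exact le_rfl
      · intro i hi
        by_cases hik : i ≤ k
        · beta_reduce
          rw [if_pos hik]
          exact hprop i hik
        · have hieq : i = k + 1 := by omega
          subst hieq
          beta_reduce
          rw [if_neg hik]
          exact ⟨hE2, hE3⟩
      · intro U hU i hi
        by_cases hik : i ≤ k
        · beta_reduce
          rw [if_pos hik]
          exact hinv U hU i hik
        · have hieq : i = k + 1 := by omega
          subst hieq
          beta_reduce
          rw [if_neg hik]
          exact hE4 U hU
  obtain ⟨D, hmono, hprop, hinv⟩ := key n le_rfl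
  refine ⟨fun j => D ((j : ℕ) + 1), ?_, ?_, ?_⟩
  · intro a b hab
    exact hmono ((a : ℕ) + 1) ((b : ℕ) + 1)
      (by have : (a : ℕ) ≤ b := hab; omega) (by omega)
  · intro j
    exact hprop ((j : ℕ) + 1) (by omega)
  · intro U hU
    obtain ⟨h1, hle⟩ := hfr1 U hU
    refine ⟨⟨finrank F U - 1, by omega⟩, ?_⟩
    show D ((finrank F ↥U - 1) + 1) = U
    have hi : (finrank F ↥U - 1) + 1 = finrank F ↥U := by omega
    rw [hi]
    have h := hinv U hU (finrank F ↥U) hle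
    exact le_antisymm (h.2 le_rfl) (h.1 le_rfl)
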